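/- Let D ≥ 2, λ ≥ 0, p ≥ 1, and let ω : ℝ → ℝ^p, γ_1, …, γ_{D−1} : ℝ → ℝ be differentiable curves and g : ℝ → ℝ^p any curve, satisfying the gradient flow equations ω'(t) = −((∏_{d=1}^{D−1} γ_d(t))·g(t) + (2λ/D)·ω(t)) and, for each d ∈ {1,…,D−1}, γ_d'(t) = −((∏_{d'≠d} γ_{d'}(t))·⟨ω(t), g(t)⟩ + (2λ/D)·γ_d(t)). Then for all t ≥ 0 and any two distinct indices d, d' ∈ {1,…,D−1}: γ_d(t)² − γ_{d'}(t)² = (γ_d(0)² − γ_{d'}(0)²)·exp(−(4λ/D)·t) and ‖ω(t)‖₂² − γ_{d'}(t)² = (‖ω(0)‖₂² − γ_{d'}(0)²)·exp(−(4λ/D)·t). In particular, for λ = 0 all pair-wise imbalances are conserved quantities, and for λ > 0 they decay exponentially. -/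

import Mathlib

open RealInnerProductSpace

/-- If `f' = -(c * f)` everywhere then `f t = f 0 * exp (-c * t)`. -/
lemma exp_decay_aux (c : ℝ) (f : ℝ → ℝ)
    (hf : ∀ t, HasDerivAt f (-(c * f t)) t) (t : ℝ) :
    f t = f 0 * Real.exp (-c * t) := by
  have key : ∀ s, f s * Real.exp (c * s) = f 0 := by
    intro s
    have hderiv : ∀ x, HasDerivAt (fun s => f s * Real.exp (c * s)) 0 x := by
      intro x
      have h1 : HasDerivAt (fun s => Real.exp (c * s)) (c * Real.exp (c * x)) x := by
        have := (Real.hasDerivAt_exp (c * x)).comp x ((hasDerivAt_id x).const_mul c)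
        exact this.congr_deriv (by ring)
      have := (hf x).mul h1
      refine this.congr_deriv ?_
      ring
    have hconst : ∀ x y : ℝ, (fun s => f s * Real.exp (c * s)) x
        = (fun s => f s * Real.exp (c * s)) y := by
      intro x y
      exact is_const_of_deriv_eq_zero (fun z => (hderiv z).differentiableAt)
        (fun z => (hderiv z).deriv) x y
    simpa using hconst s 0
  have := key t
  have hpos : Real.exp (c * t) ≠ 0 := (Real.exp_pos _).ne'
  field_simp [Real.exp_neg, neg_mul] at this ⊢
  rw [Real.exp_neg, ← this, mul_assoc, mul_inv_cancel₀ hpos, mul_one]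

theorem stmt_10 (D p : ℕ) (hD : 2 ≤ D) (hp : 1 ≤ p) (lam : ℝ) (hlam : 0 ≤ lam)
    (ω : ℝ → EuclideanSpace ℝ (Fin p)) (γ : Fin (D - 1) → ℝ → ℝ)
    (g : ℝ → EuclideanSpace ℝ (Fin p))
    (hω : ∀ t, HasDerivAt ω
      (-((∏ d, γ d t) • g t + (2 * lam / (D : ℝ)) • ω t)) t)
    (hγ : ∀ (d : Fin (D - 1)) (t : ℝ), HasDerivAt (γ d)
      (-((∏ d' ∈ Finset.univ.erase d, γ d' t) * ⟪ω t, g t⟫ + (2 * lam / (D : ℝ)) * γ d t)) t) :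
    ∀ t : ℝ, 0 ≤ t →
      (∀ (d d' : Fin (D - 1)), d ≠ d' →
        γ d t ^ 2 - γ d' t ^ 2 =
          (γ d 0 ^ 2 - γ d' 0 ^ 2) * Real.exp (-(4 * lam / (D : ℝ)) * t)) ∧
      (∀ d' : Fin (D - 1),
        ‖ω t‖ ^ 2 - γ d' t ^ 2 =
          (‖ω 0‖ ^ 2 - γ d' 0 ^ 2) * Real.exp (-(4 * lam / (D : ℝ)) * t)) := by
  set c : ℝ := 4 * lam / (D : ℝ) with hc
  -- derivative of γ d ^ 2
  have hγsq : ∀ (d : Fin (D - 1)) (t : ℝ), HasDerivAt (fun s => γ d s ^ 2)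
      (-(2 * (∏ d', γ d' t) * ⟪ω t, g t⟫ + c * (γ d t ^ 2))) t := by
    intro d t
    have h := (hγ d t).pow 2
    refine h.congr_deriv ?_
    have hprod : γ d t * ∏ d' ∈ Finset.univ.erase d, γ d' t = ∏ d', γ d' t :=
      Finset.mul_prod_erase Finset.univ (fun d' => γ d' t) (Finset.mem_univ d)
    simp only [hc]
    push_cast
    rw [← hprod]
    ring
  -- derivative of ‖ω‖ ^ 2
  have hωsq : ∀ t : ℝ, HasDerivAt (fun s => ‖ω s‖ ^ 2)
      (-(2 * (∏ d', γ d' t) * ⟪ω t, g t⟫ + c * (‖ω t‖ ^ 2))) t := by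
    intro t
    have h := (hω t).inner ℝ (hω t)
    have heq : (fun s => ⟪ω s, ω s⟫) = fun s => ‖ω s‖ ^ 2 := by
      funext s; rw [real_inner_self_eq_norm_sq]
    rw [heq] at h
    refine h.congr_deriv ?_
    simp only [inner_neg_left, inner_neg_right, inner_add_left, inner_add_right,
      real_inner_smul_left, real_inner_smul_right, real_inner_self_eq_norm_sq,
      real_inner_comm (g t) (ω t), hc]
    ring
  intro t ht
  constructor
  · intro d d' hdd
    have hf : ∀ s, HasDerivAt (fun u => γ d u ^ 2 - γ d' u ^ 2)
        (-(c * (γ d s ^ 2 - γ d' s ^ 2))) s := by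
      intro s
      have := (hγsq d s).sub (hγsq d' s)
      refine this.congr_deriv ?_
      ring
    exact exp_decay_aux c _ hf t
  · intro d'
    have hf : ∀ s, HasDerivAt (fun u => ‖ω u‖ ^ 2 - γ d' u ^ 2)
        (-(c * (‖ω s‖ ^ 2 - γ d' s ^ 2))) s := by
      intro s
      have := (hωsq s).sub (hγsq d' s)
      refine this.congr_deriv ?_
      ring
    exact exp_decay_aux c _ hf t
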